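/- For 0 ≤ i ≤ d, the sum W_0 + W_1 + ⋯ + W_i equals the sum U_0 + U_1 + ⋯ + U_i. -/

import Mathlib

theorem stmt_12
    {𝕂 : Type*} [Field 𝕂] {V : Type*} [AddCommGroup V] [Module 𝕂 V]
    [FiniteDimensional 𝕂 V]
    (d : ℕ) (hd : 1 ≤ d) (q a : 𝕂) (hq : q ≠ 0) (ha : a ≠ 0)
    (hq2 : ∀ i : ℕ, 1 ≤ i → i ≤ d → q ^ (2 * i) ≠ 1)
    (ha2 : ∀ i : ℤ, 1 - (d : ℤ) ≤ i → i ≤ (d : ℤ) - 1 → a ^ 2 ≠ q ^ (2 * i))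
    (K : Module.End 𝕂 V) (hK : IsUnit K)
    (U : ℕ → Submodule 𝕂 V)
    (hUne : ∀ i, i ≤ d → U i ≠ ⊥)
    (hUint : DirectSum.IsInternal (fun i : Fin (d + 1) => U i.1))
    (hKU : ∀ i, i ≤ d → ∀ v ∈ U i, K v = (q ^ ((d : ℤ) - 2 * (i : ℤ))) • v)
    (ψ : Module.End 𝕂 V)
    (hψ0 : ∀ v ∈ U 0, ψ v = 0)
    (hψU : ∀ i, 1 ≤ i → i ≤ d → ∀ v ∈ U i, ψ v ∈ U (i - 1))
    (hψnil : ψ ^ (d + 1) = 0)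
    (hKψ : K * ψ = q ^ 2 • (ψ * K))
    (hinv : ∀ x : 𝕂, IsUnit (1 - x • ψ))
    (B : Module.End 𝕂 V)
    (hB : B = (1 - (a * q) • ψ) * Ring.inverse (1 - (a⁻¹ * q) • ψ) * K)
    (M : Module.End 𝕂 V)
    (hM : M = (a - a⁻¹)⁻¹ • (a • K - a⁻¹ • B))
    (hMunit : IsUnit M):
    ∀ i, i ≤ d →
      (∑ j ∈ Finset.range (i + 1), Module.End.eigenspace M (q ^ ((d : ℤ) - 2 * (j : ℤ))))
        = ∑ j ∈ Finset.range (i + 1), U j := by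
  classical
  -- generic lemmas about sums of submodules
  have hsum_le : ∀ (p : ℕ → Submodule 𝕂 V) (n : ℕ) (N : Submodule 𝕂 V),
      (∀ j, j < n → p j ≤ N) → (∑ j ∈ Finset.range n, p j) ≤ N := by
    intro p n N
    induction n with
    | zero => intro _; simp
    | succ n ih =>
        intro h
        rw [Finset.sum_range_succ, Submodule.add_eq_sup]
        exact sup_le (ih fun j hj => h j (hj.trans (Nat.lt_succ_self n)))
          (h n (Nat.lt_succ_self n))
  have hmem_sum : ∀ (p : ℕ → Submodule 𝕂 V) (n j : ℕ), j < n →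
      p j ≤ ∑ k ∈ Finset.range n, p k := by
    intro p n
    induction n with
    | zero => intro j hj; omega
    | succ n ih =>
        intro j hj
        rw [Finset.sum_range_succ, Submodule.add_eq_sup]
        rcases Nat.lt_succ_iff_lt_or_eq.mp hj with h | h
        · exact (ih j h).trans le_sup_left
        · subst h; exact le_sup_right
  have hFmono : ∀ (p : ℕ → Submodule 𝕂 V) (m n : ℕ), m ≤ n →
      (∑ j ∈ Finset.range m, p j) ≤ ∑ j ∈ Finset.range n, p j := by
    intro p m n h
    exact hsum_le p m _ (fun j hj => hmem_sum p n j (lt_of_lt_of_le hj h))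
  -- distinctness of eigenvalues
  have h2 : a - a⁻¹ ≠ 0 := by
    have h0 := ha2 0 (by omega) (by omega)
    simp only [mul_zero, zpow_zero] at h0
    intro hcon
    apply h0
    have heq : a = a⁻¹ := sub_eq_zero.mp hcon
    calc a ^ 2 = a * a := sq a
      _ = a * a⁻¹ := by rw [← heq]
      _ = 1 := mul_inv_cancel₀ ha
  have h1 : ∀ j k : ℕ, j < k → k ≤ d →
      q ^ ((d : ℤ) - 2 * (j : ℤ)) ≠ q ^ ((d : ℤ) - 2 * (k : ℤ)) := by
    intro j k hjk hkd hcon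
    have hpow : q ^ ((d : ℤ) - 2 * (j : ℤ)) =
        q ^ ((d : ℤ) - 2 * (k : ℤ)) * q ^ ((2 : ℤ) * ((k : ℤ) - (j : ℤ))) := by
      rw [← zpow_add₀ hq]; congr 1; ring
    rw [hcon] at hpow
    have hne : q ^ ((d : ℤ) - 2 * (k : ℤ)) ≠ 0 := zpow_ne_zero _ hq
    have h1' : q ^ ((2 : ℤ) * ((k : ℤ) - (j : ℤ))) = 1 := by
      field_simp at hpow
      linear_combination -hpow
    have : q ^ (2 * (k - j)) = 1 := by
      have : ((2 * (k - j) : ℕ) : ℤ) = (2 : ℤ) * ((k : ℤ) - (j : ℤ)) := by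
        push_cast; omega
      rw [← zpow_natCast q (2 * (k - j)), this, h1']
    exact hq2 (k - j) (by omega) (by omega) this
  -- the whole space is the sum of the U's
  have htop : ∀ v : V, v ∈ ∑ j ∈ Finset.range (d + 1), U j := by
    intro v
    have h := hUint.submodule_iSup_eq_top
    have : (⊤ : Submodule 𝕂 V) ≤ ∑ j ∈ Finset.range (d + 1), U j := by
      rw [← h]
      exact iSup_le fun i => hmem_sum U (d + 1) i.1 i.2
    exact this trivial
  -- ψ maps U i into F i = sum of U j, j < i
  have hψmem : ∀ i, i ≤ d → ∀ v ∈ U i, ψ v ∈ ∑ j ∈ Finset.range i, U j := by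
    intro i hi v hv
    rcases Nat.eq_zero_or_pos i with h | h
    · subst h
      have : ψ v = 0 := hψ0 v hv
      rw [this]; exact Submodule.zero_mem _
    · exact hmem_sum U i (i - 1) (by omega) (hψU i h hi v hv)
  -- F m is ψ-invariant
  have hψF : ∀ m, m ≤ d + 1 → ∀ v ∈ (∑ j ∈ Finset.range m, U j), ψ v ∈ ∑ j ∈ Finset.range m, U j := by
    intro m hm
    have : (∑ j ∈ Finset.range m, U j) ≤ Submodule.comap ψ (∑ j ∈ Finset.range m, U j) := by
      apply hsum_le
      intro j hj v hv
      simp only [Submodule.mem_comap]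
      exact hFmono U j m (by omega) (hψmem j (by omega) v hv)
    intro v hv
    exact this hv
  -- the geometric series inverse
  have hgeom : ∀ c : 𝕂, Ring.inverse (1 - c • ψ) =
      ∑ k ∈ Finset.range (d + 1), c ^ k • ψ ^ k := by
    intro c
    have hmul : (1 - c • ψ) * (∑ k ∈ Finset.range (d + 1), c ^ k • ψ ^ k) = 1 := by
      have expand : ∀ k : ℕ, (1 - c • ψ) * (c ^ k • ψ ^ k)
          = c ^ k • ψ ^ k - c ^ (k + 1) • ψ ^ (k + 1) := by
        intro k
        rw [sub_mul, one_mul]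
        congr 1
        rw [smul_mul_smul_comm, ← pow_succ', ← pow_succ']
      rw [Finset.mul_sum]
      simp only [expand]
      rw [Finset.sum_range_sub' (fun k => c ^ k • ψ ^ k) (d + 1)]
      simp [hψnil]
    have h3 := Ring.mul_inverse_cancel _ (hinv c)
    exact (hinv c).mul_left_cancel (h3.trans hmul.symm)
  -- powers of ψ applied to U i land in F i
  have hψpow : ∀ i, i ≤ d → ∀ v ∈ U i, ∀ k : ℕ, 1 ≤ k →
      (ψ ^ k) v ∈ ∑ j ∈ Finset.range i, U j := by
    intro i hi v hv k
    induction k with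
    | zero => omega
    | succ k ih =>
        intro _
        rcases Nat.eq_zero_or_pos k with h | h
        · subst h
          simpa using hψmem i hi v hv
        · have hk := ih h
          rw [pow_succ', Module.End.mul_apply]
          exact hψF i (by omega) _ hk
  -- action of B on U i
  have hBU : ∀ i, i ≤ d → ∀ v ∈ U i,
      B v - q ^ ((d : ℤ) - 2 * (i : ℤ)) • v ∈ ∑ j ∈ Finset.range i, U j := by
    intro i hi v hv
    have hKv : K v = q ^ ((d : ℤ) - 2 * (i : ℤ)) • v := hKU i hi v hv
    have hwmem : (∑ k ∈ Finset.range d, (a⁻¹ * q) ^ (k + 1) • (ψ ^ (k + 1)) v)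
        ∈ ∑ j ∈ Finset.range i, U j :=
      Submodule.sum_mem _ fun k _ =>
        Submodule.smul_mem _ _ (hψpow i hi v hv (k + 1) (by omega))
    have hSv : (∑ k ∈ Finset.range (d + 1), (a⁻¹ * q) ^ k • ψ ^ k) v
        = v + ∑ k ∈ Finset.range d, (a⁻¹ * q) ^ (k + 1) • (ψ ^ (k + 1)) v := by
      rw [LinearMap.sum_apply]
      rw [Finset.sum_range_succ' (fun k => ((a⁻¹ * q) ^ k • ψ ^ k) v) d]
      simp only [LinearMap.smul_apply]
      simp [add_comm]
    have hBv : B v = q ^ ((d : ℤ) - 2 * (i : ℤ)) •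
          (v + ∑ k ∈ Finset.range d, (a⁻¹ * q) ^ (k + 1) • (ψ ^ (k + 1)) v)
        - (a * q) • ψ (q ^ ((d : ℤ) - 2 * (i : ℤ)) •
          (v + ∑ k ∈ Finset.range d, (a⁻¹ * q) ^ (k + 1) • (ψ ^ (k + 1)) v)) := by
      rw [hB]
      simp only [Module.End.mul_apply, hgeom, hKv, map_smul, hSv,
        LinearMap.sub_apply, Module.End.one_apply, LinearMap.smul_apply]
      module
    have hdiff : B v - q ^ ((d : ℤ) - 2 * (i : ℤ)) • v
        = q ^ ((d : ℤ) - 2 * (i : ℤ)) •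
            (∑ k ∈ Finset.range d, (a⁻¹ * q) ^ (k + 1) • (ψ ^ (k + 1)) v)
          - (a * q) • (q ^ ((d : ℤ) - 2 * (i : ℤ)) •
            (ψ v + ψ (∑ k ∈ Finset.range d, (a⁻¹ * q) ^ (k + 1) • (ψ ^ (k + 1)) v))) := by
      rw [hBv, map_smul, map_add]
      module
    rw [hdiff]
    exact Submodule.sub_mem _
      (Submodule.smul_mem _ _ hwmem)
      (Submodule.smul_mem _ _ (Submodule.smul_mem _ _
        (Submodule.add_mem _ (hψmem i hi v hv) (hψF i (by omega) _ hwmem))))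
  -- action of M on U i
  have hMU : ∀ i, i ≤ d → ∀ v ∈ U i,
      M v - q ^ ((d : ℤ) - 2 * (i : ℤ)) • v ∈ ∑ j ∈ Finset.range i, U j := by
    intro i hi v hv
    have hKv : K v = q ^ ((d : ℤ) - 2 * (i : ℤ)) • v := hKU i hi v hv
    have hMv : M v - q ^ ((d : ℤ) - 2 * (i : ℤ)) • v
        = (-((a - a⁻¹)⁻¹ * a⁻¹)) • (B v - q ^ ((d : ℤ) - 2 * (i : ℤ)) • v) := by
      have h2' : a * a - 1 ≠ 0 := by
        intro hcon
        apply h2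
        field_simp
        linear_combination hcon
      rw [hM]
      simp only [LinearMap.smul_apply, LinearMap.sub_apply, hKv]
      match_scalars <;> field_simp [← sq] at h2' ⊢ <;> ring
    rw [hMv]
    exact Submodule.smul_mem _ _ (hBU i hi v hv)
  -- (M - lam i) maps F (i+1) into F i
  have hMF : ∀ i, i ≤ d → ∀ v ∈ (∑ j ∈ Finset.range (i + 1), U j),
      M v - q ^ ((d : ℤ) - 2 * (i : ℤ)) • v ∈ ∑ j ∈ Finset.range i, U j := by
    intro i hi
    have hle : (∑ j ∈ Finset.range (i + 1), U j) ≤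
        Submodule.comap (M - q ^ ((d : ℤ) - 2 * (i : ℤ)) • (1 : Module.End 𝕂 V))
          (∑ j ∈ Finset.range i, U j) := by
      apply hsum_le
      intro j hj v hv
      simp only [Submodule.mem_comap, LinearMap.sub_apply, LinearMap.smul_apply,
        Module.End.one_apply]
      rcases Nat.lt_succ_iff_lt_or_eq.mp hj with h | h
      · have hMj := hMU j (by omega) v hv
        have heq : M v - q ^ ((d : ℤ) - 2 * (i : ℤ)) • v
            = (M v - q ^ ((d : ℤ) - 2 * (j : ℤ)) • v)
              + (q ^ ((d : ℤ) - 2 * (j : ℤ)) - q ^ ((d : ℤ) - 2 * (i : ℤ))) • v := by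
          module
        rw [heq]
        exact Submodule.add_mem _ (hFmono U j i (by omega) hMj)
          (Submodule.smul_mem _ _ (hmem_sum U i j h hv))
      · subst h
        exact hMU j hi v hv
    intro v hv
    have := hle hv
    simpa only [Submodule.mem_comap, LinearMap.sub_apply, LinearMap.smul_apply,
      Module.End.one_apply] using this
  -- forward inclusion : eigenspaces are inside the corresponding F
  have h10 : ∀ j, j ≤ d → Module.End.eigenspace M (q ^ ((d : ℤ) - 2 * (j : ℤ)))
      ≤ ∑ k ∈ Finset.range (j + 1), U k := by
    intro j hj v hv
    have hMv : M v = q ^ ((d : ℤ) - 2 * (j : ℤ)) • v :=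
      Module.End.mem_eigenspace_iff.mp hv
    have key : ∀ k : ℕ, j + k ≤ d → v ∈ (∑ l ∈ Finset.range (j + 1 + k), U l) →
        v ∈ ∑ l ∈ Finset.range (j + 1), U l := by
      intro k
      induction k with
      | zero => intro _ h; simpa using h
      | succ k ih =>
          intro hk hv'
          apply ih (by omega)
          have hv'' : v ∈ ∑ l ∈ Finset.range ((j + k + 1) + 1), U l := by
            have : j + 1 + (k + 1) = (j + k + 1) + 1 := by omega
            rwa [this] at hv'
          have h9' := hMF (j + k + 1) (by omega) v hv''
          rw [hMv, ← sub_smul] at h9'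
          have hne : q ^ ((d : ℤ) - 2 * (j : ℤ))
              - q ^ ((d : ℤ) - 2 * ((j + k + 1 : ℕ) : ℤ)) ≠ 0 :=
            sub_ne_zero.mpr (h1 j (j + k + 1) (by omega) (by omega))
          have hvin : v ∈ ∑ l ∈ Finset.range (j + k + 1), U l := by
            have := Submodule.smul_mem (∑ l ∈ Finset.range (j + k + 1), U l) (q ^ ((d : ℤ) - 2 * (j : ℤ)) - q ^ ((d : ℤ) - 2 * ((j + k + 1 : ℕ) : ℤ)))⁻¹ h9'
            rwa [smul_smul, inv_mul_cancel₀ hne, one_smul] at this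
          have : j + 1 + k = j + k + 1 := by omega
          rwa [this]
    have hvtop : v ∈ ∑ l ∈ Finset.range (j + 1 + (d - j)), U l := by
      have : j + 1 + (d - j) = d + 1 := by omega
      rw [this]
      exact htop v
    exact key (d - j) (by omega) hvtop
  -- surjectivity of (M - μ) on sums of eigenspaces
  have h11 : ∀ n : ℕ, ∀ μ : 𝕂, (∀ j, j < n → μ ≠ q ^ ((d : ℤ) - 2 * (j : ℤ))) →
      ∀ w ∈ (∑ j ∈ Finset.range n, Module.End.eigenspace M (q ^ ((d : ℤ) - 2 * (j : ℤ)))),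
      ∃ u ∈ (∑ j ∈ Finset.range n, Module.End.eigenspace M (q ^ ((d : ℤ) - 2 * (j : ℤ)))),
        M u - μ • u = w := by
    intro n
    induction n with
    | zero =>
        intro μ _ w hw
        simp only [Finset.range_zero, Finset.sum_empty] at hw
        refine ⟨0, by simp, ?_⟩
        have : w = 0 := by simpa using hw
        simp [this]
    | succ n ih =>
        intro μ hμ w hw
        rw [Finset.sum_range_succ, Submodule.add_eq_sup] at hw
        obtain ⟨w₁, hw₁, w₂, hw₂, rfl⟩ := Submodule.mem_sup.mp hw
        obtain ⟨u₁, hu₁, hMu₁⟩ := ih μ (fun j hj => hμ j (by omega)) w₁ hw₁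
        have hc : q ^ ((d : ℤ) - 2 * (n : ℤ)) - μ ≠ 0 :=
          sub_ne_zero.mpr (fun h => hμ n (Nat.lt_succ_self n) h.symm)
        refine ⟨u₁ + (q ^ ((d : ℤ) - 2 * (n : ℤ)) - μ)⁻¹ • w₂, ?_, ?_⟩
        · rw [Finset.sum_range_succ, Submodule.add_eq_sup]
          exact Submodule.add_mem _ (Submodule.mem_sup_left hu₁)
            (Submodule.mem_sup_right (Submodule.smul_mem _ _ hw₂))
        · have hMw₂ : M w₂ = q ^ ((d : ℤ) - 2 * (n : ℤ)) • w₂ :=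
            Module.End.mem_eigenspace_iff.mp hw₂
          rw [map_add, map_smul, hMw₂]
          have expand : M u₁ + (q ^ ((d : ℤ) - 2 * (n : ℤ)) - μ)⁻¹ • q ^ ((d : ℤ) - 2 * (n : ℤ)) • w₂
              - μ • (u₁ + (q ^ ((d : ℤ) - 2 * (n : ℤ)) - μ)⁻¹ • w₂)
              = (M u₁ - μ • u₁) + ((q ^ ((d : ℤ) - 2 * (n : ℤ)) - μ)⁻¹ * (q ^ ((d : ℤ) - 2 * (n : ℤ)) - μ)) • w₂ := by
            module
          rw [expand, inv_mul_cancel₀ hc, one_smul, hMu₁]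
  -- reverse inclusion : U i is inside the sum of eigenspaces
  have hrev : ∀ i, i ≤ d → U i ≤
      ∑ j ∈ Finset.range (i + 1), Module.End.eigenspace M (q ^ ((d : ℤ) - 2 * (j : ℤ))) := by
    intro i
    induction i using Nat.strong_induction_on with
    | _ i ih =>
      intro hi v hv
      have he : M v - q ^ ((d : ℤ) - 2 * (i : ℤ)) • v ∈ ∑ j ∈ Finset.range i, U j :=
        hMU i hi v hv
      have heW : M v - q ^ ((d : ℤ) - 2 * (i : ℤ)) • v
          ∈ ∑ j ∈ Finset.range i, Module.End.eigenspace M (q ^ ((d : ℤ) - 2 * (j : ℤ))) := by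
        refine hsum_le U i _ ?_ he
        intro j hj
        exact le_trans (ih j hj (by omega))
          (hFmono (fun j => Module.End.eigenspace M (q ^ ((d : ℤ) - 2 * (j : ℤ)))) (j + 1) i (by omega))
      obtain ⟨u, hu, hMu⟩ := h11 i (q ^ ((d : ℤ) - 2 * (i : ℤ)))
        (fun j hj => (h1 j i hj hi).symm) _ heW
      have hvW : v - u ∈ Module.End.eigenspace M (q ^ ((d : ℤ) - 2 * (i : ℤ))) := by
        rw [Module.End.mem_eigenspace_iff]
        have hsub : M (v - u) - q ^ ((d : ℤ) - 2 * (i : ℤ)) • (v - u)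
            = (M v - q ^ ((d : ℤ) - 2 * (i : ℤ)) • v)
              - (M u - q ^ ((d : ℤ) - 2 * (i : ℤ)) • u) := by
          rw [map_sub]; module
        have : M (v - u) - q ^ ((d : ℤ) - 2 * (i : ℤ)) • (v - u) = 0 := by
          rw [hsub, hMu]; abel
        linear_combination (norm := module) this
      have hveq : v = (v - u) + u := by abel
      rw [hveq, Finset.sum_range_succ, Submodule.add_eq_sup]
      exact Submodule.add_mem _ (Submodule.mem_sup_right hvW) (Submodule.mem_sup_left hu)
  -- conclusion
  intro i hi
  apply le_antisymm
  · exact hsum_le _ (i + 1) _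
      (fun j hj => le_trans (h10 j (by omega)) (hFmono U (j + 1) (i + 1) (by omega)))
  · exact hsum_le U (i + 1) _
      (fun j hj => le_trans (hrev j (by omega))
        (hFmono (fun j => Module.End.eigenspace M (q ^ ((d : ℤ) - 2 * (j : ℤ)))) (j + 1) (i + 1) (by omega)))
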